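/- Let G be a connected finite simple graph with a split between A and B. Let G_A be the graph obtained from the subgraph of G induced by A ∪ 𝔰(A) by adding a new vertex v_A adjacent to exactly the vertices of A, and let G_B be obtained analogously from B ∪ 𝔰(B) with a new vertex v_B adjacent to exactly the vertices of B. If the circular word v_A τ_A v_A τ̂_A is a circle representation of G_A and the circular word v_B τ_B v_B τ̂_B is a circle representation of G_B, then the circular word τ_A τ_B τ̂_A τ̂_B is a circle representation of G. -/

import Mathlib

/-- The segment of the word `τ` strictly between the two occurrences of `u`. -/
def betweenOccs {V : Type*} [DecidableEq V] (τ : List V) (u : V) : List V :=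
  ((τ.dropWhile (fun x => decide (x ≠ u))).drop 1).takeWhile (fun x => decide (x ≠ u))

/-- Two symbols `u` and `v` alternate in the circular word `τ` (i.e. their four
occurrences appear in cyclic order `u, v, u, v`): exactly one of the two
occurrences of `v` lies strictly between the two occurrences of `u`. -/
def Alternates {V : Type*} [DecidableEq V] (τ : List V) (u v : V) : Prop :=
  (betweenOccs τ u).count v = 1

/-- `τ` is a circle representation of `G`: a circular word (modelled as a list read
cyclically) in which every vertex occurs exactly twice, and two distinct vertices are
adjacent iff their occurrences alternate. -/
def IsCircleRep {V : Type*} [DecidableEq V] (G : SimpleGraph V) (τ : List V) : Prop :=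
  (∀ v : V, τ.count v = 2) ∧
  ∀ u v : V, u ≠ v → (G.Adj u v ↔ Alternates τ u v)

/-- A split of `G` between `A` and `B`, with short sides `SA = 𝔰(A)` and `SB = 𝔰(B)`:
a partition of the vertices into four parts such that every vertex of `A` is adjacent
to every vertex of `B`, there are no edges between `SA` and `B ∪ SB` nor between
`SB` and `A ∪ SA`, and both sides have at least two vertices. -/
def IsSplit {V : Type*} [DecidableEq V] (G : SimpleGraph V) (A B SA SB : Finset V) : Prop :=
  (∀ v : V, v ∈ A ∪ B ∪ SA ∪ SB) ∧
  Disjoint A B ∧ Disjoint A SA ∧ Disjoint A SB ∧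
  Disjoint B SA ∧ Disjoint B SB ∧ Disjoint SA SB ∧
  (∀ a ∈ A, ∀ b ∈ B, G.Adj a b) ∧
  (∀ s ∈ SA, ∀ x ∈ B ∪ SB, ¬ G.Adj s x) ∧
  (∀ s ∈ SB, ∀ x ∈ A ∪ SA, ¬ G.Adj s x) ∧
  2 ≤ (A ∪ SA).card ∧ 2 ≤ (B ∪ SB).card

/-- `τ` is a circle representation of the graph `G` restricted to the vertex set `s`:
every vertex of `s` occurs exactly twice in the circular word `τ`, no other vertex
occurs, and two distinct vertices of `s` are adjacent iff their occurrences alternate. -/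
def IsCircleRepOn {W : Type*} [DecidableEq W] (G : SimpleGraph W) (s : Set W)
    (τ : List W) : Prop :=
  (∀ v ∈ s, τ.count v = 2) ∧ (∀ v ∈ τ, v ∈ s) ∧
  ∀ u v : W, u ∈ s → v ∈ s → u ≠ v → (G.Adj u v ↔ Alternates τ u v)

/-- The graph obtained from the subgraph of `G` induced by `Φ ∪ S` by adding a new
vertex (modelled as `none`) adjacent to exactly the vertices of `Φ`.  It is a graph
on `Option V`; only the vertices `some '' (Φ ∪ S) ∪ {none}` are relevant. -/
def attachGraph {V : Type*} (G : SimpleGraph V) (Φ S : Set V) : SimpleGraph (Option V) :=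
  SimpleGraph.fromRel (fun u v =>
    match u, v with
    | some a, some b => a ∈ Φ ∪ S ∧ b ∈ Φ ∪ S ∧ G.Adj a b
    | some a, none => a ∈ Φ
    | _, _ => False)

section Aux
variable {V : Type*} [DecidableEq V]

lemma dropWhile_ne_eq (u : V) (l r : List V) (h : u ∉ l) :
    (l ++ u :: r).dropWhile (fun x => decide (x ≠ u)) = u :: r := by
  induction l with
  | nil => simp
  | cons a t ih =>
    have ha : a ≠ u := by rintro rfl; exact h List.mem_cons_self
    have h' : u ∉ t := fun hm => h (List.mem_cons_of_mem _ hm)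
    rw [List.cons_append, List.dropWhile_cons]
    simp only [ha, ne_eq, not_false_eq_true, decide_true, if_true]
    exact ih h'

lemma takeWhile_ne_eq (u : V) (l r : List V) (h : u ∉ l) :
    (l ++ u :: r).takeWhile (fun x => decide (x ≠ u)) = l := by
  induction l with
  | nil => simp
  | cons a t ih =>
    have ha : a ≠ u := by rintro rfl; exact h List.mem_cons_self
    have h' : u ∉ t := fun hm => h (List.mem_cons_of_mem _ hm)
    rw [List.cons_append, List.takeWhile_cons]
    simp only [ha, ne_eq, not_false_eq_true, decide_true, if_true]
    rw [ih h']

lemma betweenOccs_eq (u : V) (l₁ l₂ l₃ : List V) (h1 : u ∉ l₁) (h2 : u ∉ l₂) :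
    betweenOccs (l₁ ++ u :: (l₂ ++ u :: l₃)) u = l₂ := by
  unfold betweenOccs
  rw [dropWhile_ne_eq u l₁ _ h1]
  simp only [List.drop_succ_cons, List.drop_zero]
  exact takeWhile_ne_eq u l₂ _ h2

attribute [-instance] instBEqOption

lemma count_map_some (l : List V) (u : V) :
    (l.map some).count (some u) = l.count u := by
  induction l with
  | nil => rfl
  | cons a t ih =>
    rw [List.map_cons, List.count_cons, List.count_cons, ih]
    by_cases h : a = u
    · simp [h]
    · simp [h, beq_iff_eq]

lemma count_none_map (l : List V) :
    (l.map some).count (none : Option V) = 0 :=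
  List.count_eq_zero.mpr (by simp)

lemma exists_decomp_one {u : V} {l : List V} (h : l.count u = 1) :
    ∃ p q, l = p ++ u :: q ∧ u ∉ p ∧ u ∉ q := by
  induction l with
  | nil => simp at h
  | cons a t ih =>
    by_cases hau : a = u
    · have ht : t.count u = 0 := by simpa [List.count_cons, hau] using h
      exact ⟨[], t, by simp [hau], by simp, List.count_eq_zero.mp ht⟩
    · have hau' : u ≠ a := fun e => hau e.symm
      have ht : t.count u = 1 := by simpa [List.count_cons, hau', hau] using h
      obtain ⟨p, q, rfl, hp, hq⟩ := ih ht
      exact ⟨a :: p, q, rfl, by simp [hp, hau'], hq⟩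

lemma exists_decomp_two {u : V} {l : List V} (h : l.count u = 2) :
    ∃ p q r, l = p ++ u :: (q ++ u :: r) ∧ u ∉ p ∧ u ∉ q ∧ u ∉ r := by
  induction l with
  | nil => simp at h
  | cons a t ih =>
    by_cases hau : a = u
    · have ht : t.count u = 1 := by simpa [List.count_cons, hau] using h
      obtain ⟨q, r, rfl, hq, hr⟩ := exists_decomp_one ht
      exact ⟨[], q, r, by simp [hau], by simp, hq, hr⟩
    · have hau' : u ≠ a := fun e => hau e.symm
      have ht : t.count u = 2 := by simpa [List.count_cons, hau', hau] using h
      obtain ⟨p, q, r, rfl, hp, hq, hr⟩ := ih ht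
      exact ⟨a :: p, q, r, rfl, by simp [hp, hau'], hq, hr⟩

end Aux

lemma count_map_some' {V : Type*} [DecidableEq V] [BEq (Option V)] [LawfulBEq (Option V)] (l : List V) (u : V) :
    (l.map some).count (some u) = l.count u := by
  induction l with
  | nil => rfl
  | cons a t ih =>
    rw [List.map_cons, List.count_cons, List.count_cons, ih]
    by_cases h : a = u
    · simp [h]
    · simp [h]

lemma count_none_map' {V : Type*} [BEq (Option V)] [LawfulBEq (Option V)] (l : List V) :
    (l.map some).count (none : Option V) = 0 :=
  List.count_eq_zero.mpr (by simp)

lemma key_lemma {V : Type*} [DecidableEq V] (u : V) (pre w₁ mid w₂ post : List V)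
    (h2 : w₁.count u + w₂.count u = 2) (hpre : u ∉ pre) (hmid : u ∉ mid) :
    ∃ (s t : List V) (sp : Bool),
      betweenOccs (pre ++ w₁ ++ mid ++ w₂ ++ post) u
        = s ++ (if sp then mid else []) ++ t ∧
      betweenOccs (none :: w₁.map some ++ none :: w₂.map some) (some u)
        = s.map some ++ (if sp then [none] else []) ++ t.map some ∧
      (∀ x ∈ s ++ t, x ∈ w₁ ++ w₂) ∧
      (sp = true ↔ w₁.count u = 1) := by
  rcases Nat.lt_or_ge (w₁.count u) 1 with hc | hc
  · -- count in w₁ is 0, so w₂ has 2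
    have hc0 : w₁.count u = 0 := by omega
    have hw1 : u ∉ w₁ := List.count_eq_zero.mp hc0
    have hc2 : w₂.count u = 2 := by omega
    obtain ⟨p, q, r, rfl, hp, hq, hr⟩ := exists_decomp_two hc2
    refine ⟨q, [], false, ?_, ?_, ?_, by simp [hc0]⟩
    · have e : pre ++ w₁ ++ mid ++ (p ++ u :: (q ++ u :: r)) ++ post
          = (pre ++ w₁ ++ mid ++ p) ++ u :: (q ++ u :: (r ++ post)) := by
        simp [List.append_assoc]
      rw [e, betweenOccs_eq u _ _ _ (by simp [hpre, hmid, hw1, hp]) hq]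
      simp
    · have e : (none :: w₁.map some ++ none :: (p ++ u :: (q ++ u :: r)).map some : List (Option V))
          = (none :: w₁.map some ++ none :: p.map some)
            ++ (some u) :: (q.map some ++ (some u) :: r.map some) := by
        simp [List.append_assoc]
      rw [e, betweenOccs_eq (some u) _ _ _ (by simp [hw1, hp]) (by simp [hq])]
      simp
    · intro x hx
      simp only [List.append_nil] at hx
      simp [List.mem_append, hx]
  · rcases Nat.lt_or_ge (w₁.count u) 2 with hc' | hc'
    · -- counts (1,1)
      have hc1 : w₁.count u = 1 := by omega
      have hc1' : w₂.count u = 1 := by omega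
      obtain ⟨p, q, rfl, hp, hq⟩ := exists_decomp_one hc1
      obtain ⟨p', q', rfl, hp', hq'⟩ := exists_decomp_one hc1'
      refine ⟨q, p', true, ?_, ?_, ?_, by simp [hc1]⟩
      · have e : pre ++ (p ++ u :: q) ++ mid ++ (p' ++ u :: q') ++ post
            = (pre ++ p) ++ u :: ((q ++ (mid ++ p')) ++ u :: (q' ++ post)) := by
          simp [List.append_assoc]
        rw [e, betweenOccs_eq u _ _ _ (by simp [hpre, hp]) (by simp [hq, hmid, hp'])]
        simp [List.append_assoc]
      · have e : (none :: (p ++ u :: q).map some ++ none :: (p' ++ u :: q').map some : List (Option V))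
            = (none :: p.map some)
              ++ (some u) :: ((q.map some ++ none :: p'.map some) ++ (some u) :: q'.map some) := by
          simp [List.append_assoc]
        rw [e, betweenOccs_eq (some u) _ _ _ (by simp [hp]) (by simp [hq, hp'])]
        simp [List.append_assoc]
      · intro x hx
        simp only [List.mem_append] at hx ⊢
        rcases hx with hx | hx
        · exact Or.inl (by simp [hx])
        · exact Or.inr (by simp [hx])
    · -- count in w₁ is 2
      have hc2 : w₁.count u = 2 := by
        have := List.count_le_length (a := u) (l := w₁)
        omega
      have hc0 : w₂.count u = 0 := by omega
      have hw2 : u ∉ w₂ := List.count_eq_zero.mp hc0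
      obtain ⟨p, q, r, rfl, hp, hq, hr⟩ := exists_decomp_two hc2
      refine ⟨q, [], false, ?_, ?_, ?_, by simp [hc2]⟩
      · have e : pre ++ (p ++ u :: (q ++ u :: r)) ++ mid ++ w₂ ++ post
            = (pre ++ p) ++ u :: (q ++ u :: (r ++ (mid ++ (w₂ ++ post)))) := by
          simp [List.append_assoc]
        rw [e, betweenOccs_eq u _ _ _ (by simp [hpre, hp]) hq]
        simp
      · have e : (none :: (p ++ u :: (q ++ u :: r)).map some ++ none :: w₂.map some : List (Option V))
            = (none :: p.map some)
              ++ (some u) :: (q.map some ++ (some u) :: (r.map some ++ none :: w₂.map some)) := by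
          simp [List.append_assoc]
        rw [e, betweenOccs_eq (some u) _ _ _ (by simp [hp]) (by simp [hq])]
        simp
      · intro x hx
        simp only [List.append_nil] at hx
        simp [List.mem_append, hx]

lemma attach_adj_some {V : Type*} (G : SimpleGraph V) (Φ S : Set V) (a b : V)
    (ha : a ∈ Φ ∪ S) (hb : b ∈ Φ ∪ S) (hab : a ≠ b) :
    (attachGraph G Φ S).Adj (some a) (some b) ↔ G.Adj a b := by
  simp only [attachGraph, SimpleGraph.fromRel_adj]
  constructor
  · rintro ⟨-, h | h⟩
    · exact h.2.2
    · exact h.2.2.symm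
  · intro h
    exact ⟨by simp [hab], Or.inl ⟨ha, hb, h⟩⟩

lemma attach_adj_none {V : Type*} (G : SimpleGraph V) (Φ S : Set V) (a : V) :
    (attachGraph G Φ S).Adj (some a) none ↔ a ∈ Φ := by
  simp only [attachGraph, SimpleGraph.fromRel_adj]
  constructor
  · rintro ⟨-, h | h⟩
    · exact h
    · exact h.elim
  · intro h
    exact ⟨by simp, Or.inl h⟩

/-- Joining circle representations of the two sides of a split.  Here
`G_A = attachGraph G ↑A ↑SA` is the graph on `A ∪ 𝔰(A)` together with a new vertex
`v_A = none` adjacent to exactly the vertices of `A`, and similarly for `G_B`.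
If `v_A τ_A v_A τ̂_A` represents `G_A` and `v_B τ_B v_B τ̂_B` represents `G_B`,
then `τ_A τ_B τ̂_A τ̂_B` is a circle representation of `G`. -/
theorem join_of_split_representations
    {V : Type*} [DecidableEq V] [Fintype V]
    (G : SimpleGraph V) (hconn : G.Connected)
    (A B SA SB : Finset V) (hsplit : IsSplit G A B SA SB)
    (τA τA' τB τB' : List V)
    (hA : IsCircleRepOn (attachGraph G ↑A ↑SA) (insert none (some '' (↑A ∪ ↑SA)))
      (none :: τA.map some ++ none :: τA'.map some))
    (hB : IsCircleRepOn (attachGraph G ↑B ↑SB) (insert none (some '' (↑B ∪ ↑SB)))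
      (none :: τB.map some ++ none :: τB'.map some)) :
    IsCircleRep G (τA ++ τB ++ τA' ++ τB') := by
  obtain ⟨hcover, hAB, hASA, hASB, hBSA, hBSB, hSASB, hadjAB, hSAx, hSBx, -, -⟩ := hsplit
  obtain ⟨hAcount, hAmem, hAadj⟩ := hA
  obtain ⟨hBcount, hBmem, hBadj⟩ := hB
  have hdisj : ∀ x : V, x ∈ A ∪ SA → x ∈ B ∪ SB → False := by
    intro x hx hy
    rw [Finset.mem_union] at hx hy
    rcases hx with hx | hx <;> rcases hy with hy | hy
    · exact Finset.disjoint_left.mp hAB hx hy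
    · exact Finset.disjoint_left.mp hASB hx hy
    · exact Finset.disjoint_left.mp hBSA hy hx
    · exact Finset.disjoint_left.mp hSASB hx hy
  have hside : ∀ x : V, x ∈ A ∪ SA ∨ x ∈ B ∪ SB := by
    intro x
    have := hcover x
    simp only [Finset.mem_union] at this ⊢
    tauto
  have setmemA : ∀ x : V, x ∈ A ∪ SA → x ∈ ((↑A : Set V) ∪ ↑SA) := by
    intro x hx
    rw [Finset.mem_union] at hx
    simpa using hx
  have setmemB : ∀ x : V, x ∈ B ∪ SB → x ∈ ((↑B : Set V) ∪ ↑SB) := by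
    intro x hx
    rw [Finset.mem_union] at hx
    simpa using hx
  have insA : ∀ x : V, x ∈ A ∪ SA →
      (some x : Option V) ∈ insert none (some '' ((↑A : Set V) ∪ ↑SA)) :=
    fun x hx => Set.mem_insert_iff.mpr (Or.inr ⟨x, setmemA x hx, rfl⟩)
  have insB : ∀ x : V, x ∈ B ∪ SB →
      (some x : Option V) ∈ insert none (some '' ((↑B : Set V) ∪ ↑SB)) :=
    fun x hx => Set.mem_insert_iff.mpr (Or.inr ⟨x, setmemB x hx, rfl⟩)
  have memA : ∀ x : V, x ∈ τA ∨ x ∈ τA' → x ∈ A ∪ SA := by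
    intro x hx
    have hm : some x ∈ (none :: τA.map some ++ none :: τA'.map some) := by
      rcases hx with h | h
      · exact List.mem_append_left _ (List.mem_cons_of_mem _ (List.mem_map_of_mem h))
      · exact List.mem_append_right _ (List.mem_cons_of_mem _ (List.mem_map_of_mem h))
    have h2 := hAmem _ hm
    rw [Set.mem_insert_iff] at h2
    rcases h2 with h2 | h2
    · exact absurd h2 (by simp)
    · obtain ⟨y, hy, hyx⟩ := h2
      obtain rfl : y = x := Option.some_inj.mp hyx
      rw [Finset.mem_union]
      simpa using hy
  have memB : ∀ x : V, x ∈ τB ∨ x ∈ τB' → x ∈ B ∪ SB := by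
    intro x hx
    have hm : some x ∈ (none :: τB.map some ++ none :: τB'.map some) := by
      rcases hx with h | h
      · exact List.mem_append_left _ (List.mem_cons_of_mem _ (List.mem_map_of_mem h))
      · exact List.mem_append_right _ (List.mem_cons_of_mem _ (List.mem_map_of_mem h))
    have h2 := hBmem _ hm
    rw [Set.mem_insert_iff] at h2
    rcases h2 with h2 | h2
    · exact absurd h2 (by simp)
    · obtain ⟨y, hy, hyx⟩ := h2
      obtain rfl : y = x := Option.some_inj.mp hyx
      rw [Finset.mem_union]
      simpa using hy
  have nB : ∀ v : V, v ∈ A ∪ SA → v ∉ τB ∧ v ∉ τB' := by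
    intro v hv
    constructor <;> intro hmem
    · exact hdisj v hv (memB v (Or.inl hmem))
    · exact hdisj v hv (memB v (Or.inr hmem))
  have nA : ∀ v : V, v ∈ B ∪ SB → v ∉ τA ∧ v ∉ τA' := by
    intro v hv
    constructor <;> intro hmem
    · exact hdisj v (memA v (Or.inl hmem)) hv
    · exact hdisj v (memA v (Or.inr hmem)) hv
  have cntA : ∀ u ∈ A ∪ SA, τA.count u + τA'.count u = 2 := by
    intro u hu
    have h := hAcount _ (insA u hu)
    simpa [List.count_append, List.count_cons, count_map_some, count_map_some'] using h
  have cntB : ∀ u ∈ B ∪ SB, τB.count u + τB'.count u = 2 := by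
    intro u hu
    have h := hBcount _ (insB u hu)
    simpa [List.count_append, List.count_cons, count_map_some, count_map_some'] using h
  have keyA : ∀ u ∈ A ∪ SA, ∃ s t sp,
      betweenOccs (τA ++ τB ++ τA' ++ τB') u = s ++ (if sp then τB else []) ++ t ∧
      betweenOccs (none :: τA.map some ++ none :: τA'.map some) (some u)
        = s.map some ++ (if sp then [none] else []) ++ t.map some ∧
      (∀ x ∈ s ++ t, x ∈ τA ++ τA') ∧ (sp = true ↔ τA.count u = 1) := by
    intro u hu
    obtain ⟨s, t, sp, e1, e2, e3, e4⟩ :=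
      key_lemma u [] τA τB τA' τB' (cntA u hu) (by simp) (nB u hu).1
    exact ⟨s, t, sp, by simpa [List.append_assoc] using e1, e2, e3, e4⟩
  have keyB : ∀ u ∈ B ∪ SB, ∃ s t sp,
      betweenOccs (τA ++ τB ++ τA' ++ τB') u = s ++ (if sp then τA' else []) ++ t ∧
      betweenOccs (none :: τB.map some ++ none :: τB'.map some) (some u)
        = s.map some ++ (if sp then [none] else []) ++ t.map some ∧
      (∀ x ∈ s ++ t, x ∈ τB ++ τB') ∧ (sp = true ↔ τB.count u = 1) := by
    intro u hu
    obtain ⟨s, t, sp, e1, e2, e3, e4⟩ :=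
      key_lemma u τA τB τA' τB' [] (cntB u hu) (nA u hu).1 (nA u hu).2
    exact ⟨s, t, sp, by simpa [List.append_assoc] using e1, e2, e3, e4⟩
  have splitA : ∀ u, u ∈ A ∪ SA → ∀ (s t : List V) (sp : Bool),
      betweenOccs (none :: τA.map some ++ none :: τA'.map some) (some u)
        = s.map some ++ (if sp then [none] else []) ++ t.map some →
      (u ∈ A ↔ sp = true) := by
    intro u hu s t sp e2
    have h1 : u ∈ A ↔ Alternates (none :: τA.map some ++ none :: τA'.map some) (some u) none := by
      rw [← Finset.mem_coe, ← attach_adj_none G (↑A) (↑SA) u]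
      exact hAadj (some u) none (insA u hu) (Set.mem_insert _ _) (by simp)
    rw [h1]
    unfold Alternates
    rw [e2]
    cases sp <;> simp [List.count_append, count_none_map, count_none_map', List.count_cons]
  have splitB : ∀ u, u ∈ B ∪ SB → ∀ (s t : List V) (sp : Bool),
      betweenOccs (none :: τB.map some ++ none :: τB'.map some) (some u)
        = s.map some ++ (if sp then [none] else []) ++ t.map some →
      (u ∈ B ↔ sp = true) := by
    intro u hu s t sp e2
    have h1 : u ∈ B ↔ Alternates (none :: τB.map some ++ none :: τB'.map some) (some u) none := by
      rw [← Finset.mem_coe, ← attach_adj_none G (↑B) (↑SB) u]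
      exact hBadj (some u) none (insB u hu) (Set.mem_insert _ _) (by simp)
    rw [h1]
    unfold Alternates
    rw [e2]
    cases sp <;> simp [List.count_append, count_none_map, count_none_map', List.count_cons]
  refine ⟨?_, ?_⟩
  · intro v
    rcases hside v with hv | hv
    · have h2 := cntA v hv
      have h0 := nB v hv
      simp only [List.count_append, List.count_eq_zero.mpr h0.1, List.count_eq_zero.mpr h0.2]
      omega
    · have h2 := cntB v hv
      have h0 := nA v hv
      simp only [List.count_append, List.count_eq_zero.mpr h0.1, List.count_eq_zero.mpr h0.2]
      omega
  · intro u v huv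
    rcases hside u with hu | hu <;> rcases hside v with hv | hv
    · -- both on A side
      obtain ⟨s, t, sp, e1, e2, e3, -⟩ := keyA u hu
      have hadj : G.Adj u v ↔
          Alternates (none :: τA.map some ++ none :: τA'.map some) (some u) (some v) := by
        rw [← attach_adj_some G (↑A) (↑SA) u v (setmemA u hu) (setmemA v hv) huv]
        exact hAadj (some u) (some v) (insA u hu) (insA v hv) (by simpa using huv)
      rw [hadj]
      unfold Alternates
      rw [e1, e2]
      have hvB : v ∉ τB := (nB v hv).1
      cases sp <;>
        simp [List.count_append, count_map_some, List.count_eq_zero.mpr hvB,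
          count_none_map, count_none_map', count_map_some', List.count_cons]
    · -- u on A side, v on B side
      obtain ⟨s, t, sp, e1, e2, e3, -⟩ := keyA u hu
      obtain ⟨s', t', sp', e1', e2', e3', e4'⟩ := keyB v hv
      have huA : u ∈ A ↔ sp = true := splitA u hu s t sp e2
      have hvcount : v ∈ B ↔ τB.count v = 1 := (splitB v hv s' t' sp' e2').trans e4'
      have hadj : G.Adj u v ↔ (u ∈ A ∧ v ∈ B) := by
        constructor
        · intro h
          rw [Finset.mem_union] at hu hv
          rcases hu with h1 | h1
          · rcases hv with h2 | h2
            · exact ⟨h1, h2⟩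
            · exact absurd h.symm (hSBx v h2 u (by rw [Finset.mem_union]; exact Or.inl h1))
          · exact absurd h (hSAx u h1 v (Finset.mem_union.mpr hv))
        · rintro ⟨h1, h2⟩
          exact hadjAB u h1 v h2
      rw [hadj, huA, hvcount]
      unfold Alternates
      rw [e1]
      have hvs : v ∉ s := fun h =>
        hdisj v (memA v (by simpa using e3 v (List.mem_append_left _ h))) hv
      have hvt : v ∉ t := fun h =>
        hdisj v (memA v (by simpa using e3 v (List.mem_append_right _ h))) hv
      cases sp <;>
        simp [List.count_append, List.count_eq_zero.mpr hvs, List.count_eq_zero.mpr hvt]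
    · -- u on B side, v on A side
      obtain ⟨s, t, sp, e1, e2, e3, -⟩ := keyB u hu
      obtain ⟨s', t', sp', e1', e2', e3', e4'⟩ := keyA v hv
      have huB : u ∈ B ↔ sp = true := splitB u hu s t sp e2
      have hsum := cntA v hv
      have hvcount : v ∈ A ↔ τA'.count v = 1 := by
        rw [(splitA v hv s' t' sp' e2'), e4']
        omega
      have hadj : G.Adj u v ↔ (u ∈ B ∧ v ∈ A) := by
        constructor
        · intro h
          rw [Finset.mem_union] at hu hv
          rcases hu with h1 | h1
          · rcases hv with h2 | h2
            · exact ⟨h1, h2⟩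
            · exact absurd h.symm (hSAx v h2 u (by rw [Finset.mem_union]; exact Or.inl h1))
          · exact absurd h (hSBx u h1 v (Finset.mem_union.mpr hv))
        · rintro ⟨h1, h2⟩
          exact (hadjAB v h2 u h1).symm
      rw [hadj, huB, hvcount]
      unfold Alternates
      rw [e1]
      have hvs : v ∉ s := fun h =>
        hdisj v hv (memB v (by simpa using e3 v (List.mem_append_left _ h)))
      have hvt : v ∉ t := fun h =>
        hdisj v hv (memB v (by simpa using e3 v (List.mem_append_right _ h)))
      cases sp <;>
        simp [List.count_append, List.count_eq_zero.mpr hvs, List.count_eq_zero.mpr hvt]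
    · -- both on B side
      obtain ⟨s, t, sp, e1, e2, e3, -⟩ := keyB u hu
      have hadj : G.Adj u v ↔
          Alternates (none :: τB.map some ++ none :: τB'.map some) (some u) (some v) := by
        rw [← attach_adj_some G (↑B) (↑SB) u v (setmemB u hu) (setmemB v hv) huv]
        exact hBadj (some u) (some v) (insB u hu) (insB v hv) (by simpa using huv)
      rw [hadj]
      unfold Alternates
      rw [e1, e2]
      have hvA : v ∉ τA' := (nA v hv).2
      cases sp <;>
        simp [List.count_append, count_map_some, List.count_eq_zero.mpr hvA,
          count_none_map, count_none_map', count_map_some', List.count_cons]
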